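/- Let (X, μ) be a σ-finite measure space, let K ≥ 1, let π₁, …, π_K > 0 with Σ_k π_k = 1, let β > 0, let p_data : X → [0,∞) and p₁, …, p_K : X → [0,∞) be measurable densities (each integrating to 1 w.r.t. μ). Write p_model(x) = Σ_j π_j p_j(x), let P_data, P_model, P_k denote the corresponding probability measures, M = ½(P_data + P_model), JSD(P_data‖P_model) = ½KL(P_data‖M) + ½KL(P_model‖M), and JSD_π(p₁,…,p_K) = Σ_k π_k KL(P_k‖P_model). Then, assuming all the divergences and integrals involved are finite, the value of the MGAN objective at the optimal classifier and discriminator, L := ∫_{p_data+p_model>0} p_data log (p_data/(p_data+p_model)) dμ + ∫_{p_data+p_model>0} p_model log (p_model/(p_data+p_model)) dμ − β·Σ_k π_k ∫_{p_model>0} p_k log (π_k p_k/p_model) dμ, satisfies L = 2·JSD(P_data‖P_model) − β·JSD_π(p₁,…,p_K) − log 4 − β·Σ_k π_k log π_k. -/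

import Mathlib

open MeasureTheory
open scoped ENNReal NNReal

/-- Kullback–Leibler divergence `KL(P‖Q) = ∫ log (dP/dQ) dP`. -/
noncomputable def KLdiv {X : Type*} [MeasurableSpace X] (P Q : Measure X) : ℝ :=
  ∫ x, MeasureTheory.llr P Q x ∂P

/-- Jensen–Shannon divergence
`JSD(P‖Q) = ½ KL(P‖M) + ½ KL(Q‖M)` where `M = ½ (P + Q)`. -/
noncomputable def JSDiv {X : Type*} [MeasurableSpace X] (P Q : Measure X) : ℝ :=
  (KLdiv P ((2 : ENNReal)⁻¹ • (P + Q)) + KLdiv Q ((2 : ENNReal)⁻¹ • (P + Q))) / 2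

lemma KL_withDensity {X : Type*} [MeasurableSpace X] (μ : Measure X) [SigmaFinite μ]
    (f g : X → ℝ) (hf : Measurable f) (hg : Measurable g)
    (hf0 : ∀ x, 0 ≤ f x) (hg0 : ∀ x, 0 ≤ g x)
    (hsupp : ∀ x, g x = 0 → f x = 0) (hgint : Integrable g μ) :
    KLdiv (μ.withDensity fun x => ENNReal.ofReal (f x))
        (μ.withDensity fun x => ENNReal.ofReal (g x))
      = ∫ x, f x * Real.log (f x / g x) ∂μ := by
  set F : X → ℝ≥0∞ := fun x => ENNReal.ofReal (f x) with hF
  set G : X → ℝ≥0∞ := fun x => ENNReal.ofReal (g x) with hG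
  have hFm : Measurable F := hf.ennreal_ofReal
  have hGm : Measurable G := hg.ennreal_ofReal
  set P := μ.withDensity F
  set Q := μ.withDensity G with hQdef
  have hQfin : IsFiniteMeasure Q := by
    refine isFiniteMeasure_withDensity ?_
    have : ∫⁻ x, G x ∂μ = ∫⁻ x, ‖g x‖₊ ∂μ := by
      refine lintegral_congr fun x => ?_
      rw [hG]
      rw [Real.nnnorm_of_nonneg (hg0 x)]
      exact ENNReal.ofReal_eq_coe_nnreal (hg0 x)
    rw [this]
    exact hgint.2.ne
  set h : X → ℝ≥0∞ := fun x => F x / G x with hh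
  have hhm : Measurable h := hFm.div hGm
  have hGh : ∀ x, G x * h x = F x := by
    intro x
    by_cases hx : g x = 0
    · simp [hF, hG, hh, hx, hsupp x hx]
    · exact ENNReal.mul_div_cancel' (by simp [hG, hx, (hg0 x).lt_of_ne (Ne.symm hx)])
        (by simp [hG])
  have hQh : Q.withDensity h = P := by
    rw [hQdef, ← withDensity_mul μ hGm hhm]
    congr 1
    exact funext hGh
  have hPQ : P ≪ Q := hQh ▸ withDensity_absolutelyContinuous Q h
  have hrn : (P.rnDeriv Q) =ᵐ[Q] h := by
    rw [← hQh]
    exact Measure.rnDeriv_withDensity Q hhm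
  have htoReal : ∀ x, (h x).toReal = f x / g x := by
    intro x
    rw [hh]
    simp only [ENNReal.toReal_div, hF, hG, ENNReal.toReal_ofReal (hf0 x),
      ENNReal.toReal_ofReal (hg0 x)]
  have hllr : llr P Q =ᵐ[P] fun x => Real.log (f x / g x) := by
    filter_upwards [hPQ.ae_le hrn] with x hx
    rw [llr_def]
    simp only [hx, htoReal x]
  have hμae : ∀ᵐ x ∂μ, F x ≠ 0 → llr P Q x = Real.log (f x / g x) := by
    rw [← ae_withDensity_iff hFm]
    exact hllr
  calc KLdiv P Q = ∫ x, llr P Q x ∂P := rfl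
    _ = ∫ x, (f x).toNNReal • llr P Q x ∂μ := by
        rw [← integral_withDensity_eq_integral_smul (hf.real_toNNReal) (llr P Q)]
        rfl
    _ = ∫ x, f x * Real.log (f x / g x) ∂μ := by
        refine integral_congr_ae ?_
        filter_upwards [hμae] with x hx
        by_cases hfx : f x = 0
        · simp [hfx]
        · have : F x ≠ 0 := by
            simp [hF, hfx, (hf0 x).lt_of_ne (Ne.symm hfx)]
          rw [hx this]
          simp [NNReal.smul_def, Real.coe_toNNReal _ (hf0 x)]


/-- Theorem 1 of the MGAN paper: the value of the MGAN objective at the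
optimal classifier and discriminator,
`L = ∫_{pdata+pmodel>0} pdata log (pdata/(pdata+pmodel))
   + ∫_{pdata+pmodel>0} pmodel log (pmodel/(pdata+pmodel))
   - β ∑ k, w k ∫_{pmodel>0} p k log (w k p k / pmodel)`,
satisfies `L = 2 JSD(P_data‖P_model) - β JSD_w(p 1,…,p K) - log 4
             - β ∑ k, w k log (w k)`,
where `JSD_w(p 1,…,p K) = ∑ k, w k * KL(P_k‖P_model)`, all measures being
the probability measures with the indicated densities w.r.t. the σ-finite
measure `μ`, and all divergences and integrals involved are assumed finite. -/
theorem mgan_objective_eq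
    {X : Type*} [MeasurableSpace X] (μ : Measure X) [SigmaFinite μ]
    (K : ℕ) (hK : 1 ≤ K)
    (w : Fin K → ℝ) (hw : ∀ k, 0 < w k) (hw1 : ∑ k, w k = 1)
    (beta : ℝ) (hbeta : 0 < beta)
    (pdata : X → ℝ) (hdm : Measurable pdata) (hd0 : ∀ x, 0 ≤ pdata x)
    (hdint : Integrable pdata μ) (hd1 : ∫ x, pdata x ∂μ = 1)
    (p : Fin K → X → ℝ)
    (hpm : ∀ k, Measurable (p k)) (hp0 : ∀ k x, 0 ≤ p k x)
    (hpint : ∀ k, Integrable (p k) μ) (hp1 : ∀ k, ∫ x, p k x ∂μ = 1)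
    (pmodel : X → ℝ) (hpmodel : ∀ x, pmodel x = ∑ j, w j * p j x)
    (Pdata Pmodel M : Measure X) (Pgen : Fin K → Measure X)
    (hPdata : Pdata = μ.withDensity fun x => ENNReal.ofReal (pdata x))
    (hPmodel : Pmodel = μ.withDensity fun x => ENNReal.ofReal (pmodel x))
    (hM : M = (2 : ENNReal)⁻¹ • (Pdata + Pmodel))
    (hPgen : ∀ k, Pgen k = μ.withDensity fun x => ENNReal.ofReal (p k x))
    (hfin1 : Integrable (MeasureTheory.llr Pdata M) Pdata)
    (hfin2 : Integrable (MeasureTheory.llr Pmodel M) Pmodel)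
    (hfin3 : ∀ k, Integrable (MeasureTheory.llr (Pgen k) Pmodel) (Pgen k))
    (hIntS1 : IntegrableOn
      (fun x => pdata x * Real.log (pdata x / (pdata x + pmodel x)))
      {x | 0 < pdata x + pmodel x} μ)
    (hIntS2 : IntegrableOn
      (fun x => pmodel x * Real.log (pmodel x / (pdata x + pmodel x)))
      {x | 0 < pdata x + pmodel x} μ)
    (hIntS3 : ∀ k, IntegrableOn
      (fun x => p k x * Real.log (w k * p k x / pmodel x))
      {x | 0 < pmodel x} μ) :
    (∫ x in {x | 0 < pdata x + pmodel x},
        pdata x * Real.log (pdata x / (pdata x + pmodel x)) ∂μ)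
      + (∫ x in {x | 0 < pdata x + pmodel x},
          pmodel x * Real.log (pmodel x / (pdata x + pmodel x)) ∂μ)
      - beta * ∑ k, w k * ∫ x in {x | 0 < pmodel x},
          p k x * Real.log (w k * p k x / pmodel x) ∂μ
    = 2 * JSDiv Pdata Pmodel - beta * (∑ k, w k * KLdiv (Pgen k) Pmodel)
      - Real.log 4 - beta * ∑ k, w k * Real.log (w k) := by
  -- basic facts about pmodel
  have hmm : Measurable pmodel := by
    have : pmodel = fun x => ∑ j, w j * p j x := funext hpmodel
    rw [this]
    exact Finset.measurable_sum _ fun j _ => (hpm j).const_mul _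
  have hm0 : ∀ x, 0 ≤ pmodel x := fun x => by
    rw [hpmodel x]
    exact Finset.sum_nonneg fun j _ => mul_nonneg (hw j).le (hp0 j x)
  have hmint : Integrable pmodel μ := by
    have : pmodel = fun x => ∑ j, w j * p j x := funext hpmodel
    rw [this]
    exact integrable_finset_sum _ fun j _ => ((hpint j).const_mul _)
  have hm1 : ∫ x, pmodel x ∂μ = 1 := by
    have : pmodel = fun x => ∑ j, w j * p j x := funext hpmodel
    rw [this, integral_finset_sum _ fun j _ => ((hpint j).const_mul _)]
    simp only [integral_const_mul, hp1, mul_one]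
    exact hw1
  -- support: pmodel x = 0 → p k x = 0
  have hmsupp : ∀ k x, pmodel x = 0 → p k x = 0 := by
    intro k x hx
    rw [hpmodel x] at hx
    have := (Finset.sum_eq_zero_iff_of_nonneg
      (fun j _ => mul_nonneg (hw j).le (hp0 j x))).mp hx k (Finset.mem_univ k)
    have hwk := (hw k).ne'
    exact by
      rcases mul_eq_zero.mp this with h | h
      · exact absurd h hwk
      · exact h
  -- the mixture density for M
  set s : X → ℝ := fun x => (pdata x + pmodel x) / 2 with hs
  have hsm : Measurable s := (hdm.add hmm).div_const 2
  have hs0 : ∀ x, 0 ≤ s x := fun x => by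
    have := add_nonneg (hd0 x) (hm0 x); positivity
  have hsint : Integrable s μ := (hdint.add hmint).div_const 2
  have hMdens : M = μ.withDensity fun x => ENNReal.ofReal (s x) := by
    have hfun : (fun x => ENNReal.ofReal (s x))
        = (2 : ℝ≥0∞)⁻¹ • ((fun x => ENNReal.ofReal (pdata x))
            + fun x => ENNReal.ofReal (pmodel x)) := by
      funext x
      simp only [Pi.smul_apply, Pi.add_apply, smul_eq_mul, hs]
      rw [← ENNReal.ofReal_add (hd0 x) (hm0 x),
        ENNReal.ofReal_div_of_pos (by norm_num : (0:ℝ) < 2),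
        ENNReal.div_eq_inv_mul]
      norm_num
    rw [hM, hPdata, hPmodel, ← withDensity_add_left hdm.ennreal_ofReal, hfun]
    exact (withDensity_smul 2⁻¹ (hdm.ennreal_ofReal.add hmm.ennreal_ofReal)).symm
  -- KL formulas
  have hKL1 : KLdiv Pdata M = ∫ x, pdata x * Real.log (pdata x / s x) ∂μ := by
    rw [hPdata, hMdens]
    refine KL_withDensity μ pdata s hdm hsm hd0 hs0 ?_ hsint
    intro x hx
    have : pdata x + pmodel x = 0 := by
      have : (pdata x + pmodel x) / 2 = 0 := hx
      linarith
    linarith [hm0 x, hd0 x]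
  have hKL2 : KLdiv Pmodel M = ∫ x, pmodel x * Real.log (pmodel x / s x) ∂μ := by
    rw [hPmodel, hMdens]
    refine KL_withDensity μ pmodel s hmm hsm hm0 hs0 ?_ hsint
    intro x hx
    have : pdata x + pmodel x = 0 := by
      have : (pdata x + pmodel x) / 2 = 0 := hx
      linarith
    linarith [hm0 x, hd0 x]
  have hKL3 : ∀ k, KLdiv (Pgen k) Pmodel
      = ∫ x, p k x * Real.log (p k x / pmodel x) ∂μ := by
    intro k
    rw [hPgen k, hPmodel]
    exact KL_withDensity μ (p k) pmodel (hpm k) hmm (hp0 k) hm0 (hmsupp k) hmint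
  -- notation for the main integrands
  set A : X → ℝ := fun x => pdata x * Real.log (pdata x / (pdata x + pmodel x)) with hA
  set B : X → ℝ := fun x => pmodel x * Real.log (pmodel x / (pdata x + pmodel x)) with hB
  have hSsupp : ∀ x, x ∉ {x | 0 < pdata x + pmodel x} →
      pdata x = 0 ∧ pmodel x = 0 := by
    intro x hx
    simp only [Set.mem_setOf_eq, not_lt] at hx
    constructor <;> linarith [hd0 x, hm0 x]
  have hAzero : ∀ x, x ∉ {x | 0 < pdata x + pmodel x} → A x = 0 := by
    intro x hx; simp [hA, (hSsupp x hx).1]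
  have hBzero : ∀ x, x ∉ {x | 0 < pdata x + pmodel x} → B x = 0 := by
    intro x hx; simp [hB, (hSsupp x hx).2]
  have hAint : Integrable A μ :=
    hIntS1.integrable_of_forall_notMem_eq_zero hAzero
  have hBint : Integrable B μ :=
    hIntS2.integrable_of_forall_notMem_eq_zero hBzero
  -- split KL1
  have hsplit1 : KLdiv Pdata M
      = (∫ x in {x | 0 < pdata x + pmodel x}, A x ∂μ) + Real.log 2 := by
    rw [hKL1]
    have hpt : ∀ x, pdata x * Real.log (pdata x / s x)
        = A x + Real.log 2 * pdata x := by
      intro x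
      by_cases hx : pdata x = 0
      · simp [hA, hx]
      · have hdx : 0 < pdata x := (hd0 x).lt_of_ne (Ne.symm hx)
        have htx : 0 < pdata x + pmodel x := by linarith [hm0 x]
        have : pdata x / s x = 2 * (pdata x / (pdata x + pmodel x)) := by
          rw [hs]; field_simp
        rw [this, Real.log_mul (by norm_num) (by positivity), hA]
        ring
    rw [integral_congr_ae (ae_of_all μ hpt),
      integral_add hAint (hdint.const_mul (Real.log 2)),
      setIntegral_eq_integral_of_forall_compl_eq_zero hAzero]
    simp [integral_const_mul, hd1]
  have hsplit2 : KLdiv Pmodel M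
      = (∫ x in {x | 0 < pdata x + pmodel x}, B x ∂μ) + Real.log 2 := by
    rw [hKL2]
    have hpt : ∀ x, pmodel x * Real.log (pmodel x / s x)
        = B x + Real.log 2 * pmodel x := by
      intro x
      by_cases hx : pmodel x = 0
      · simp [hB, hx]
      · have hdx : 0 < pmodel x := (hm0 x).lt_of_ne (Ne.symm hx)
        have htx : 0 < pdata x + pmodel x := by linarith [hd0 x]
        have : pmodel x / s x = 2 * (pmodel x / (pdata x + pmodel x)) := by
          rw [hs]; field_simp
        rw [this, Real.log_mul (by norm_num) (by positivity), hB]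
        ring
    rw [integral_congr_ae (ae_of_all μ hpt),
      integral_add hBint (hmint.const_mul (Real.log 2)),
      setIntegral_eq_integral_of_forall_compl_eq_zero hBzero]
    simp [integral_const_mul, hm1]
  -- the k-th term
  have hsplit3 : ∀ k, (∫ x in {x | 0 < pmodel x},
      p k x * Real.log (w k * p k x / pmodel x) ∂μ)
      = KLdiv (Pgen k) Pmodel + Real.log (w k) := by
    intro k
    set Ck : X → ℝ := fun x => p k x * Real.log (w k * p k x / pmodel x) with hCk
    set Dk : X → ℝ := fun x => p k x * Real.log (p k x / pmodel x) with hDk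
    have hCzero : ∀ x, x ∉ {x | 0 < pmodel x} → Ck x = 0 := by
      intro x hx
      simp only [Set.mem_setOf_eq, not_lt] at hx
      have : pmodel x = 0 := le_antisymm hx (hm0 x)
      simp [hCk, hmsupp k x this]
    have hCint : Integrable Ck μ :=
      (hIntS3 k).integrable_of_forall_notMem_eq_zero hCzero
    have hpt : ∀ x, Ck x = Dk x + Real.log (w k) * p k x := by
      intro x
      by_cases hx : p k x = 0
      · simp [hCk, hDk, hx]
      · have hpx : 0 < p k x := (hp0 k x).lt_of_ne (Ne.symm hx)
        have hmx : 0 < pmodel x := by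
          rcases (hm0 x).lt_or_eq with h | h
          · exact h
          · exact absurd (hmsupp k x h.symm) hx
        have h2 : w k * p k x / pmodel x = w k * (p k x / pmodel x) := by ring
        simp only [hCk, hDk]
        rw [h2, Real.log_mul (hw k).ne' (by positivity)]
        ring
    have hDint : Integrable Dk μ := by
      have : Dk = fun x => Ck x - Real.log (w k) * p k x := by
        funext x; rw [hpt x]; ring
      rw [this]
      exact hCint.sub ((hpint k).const_mul _)
    rw [setIntegral_eq_integral_of_forall_compl_eq_zero hCzero,
      integral_congr_ae (ae_of_all μ hpt),
      integral_add hDint ((hpint k).const_mul (Real.log (w k))), hKL3 k]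
    simp [integral_const_mul, hp1 k, hDk]
  -- assemble
  have hJSD : 2 * JSDiv Pdata Pmodel = KLdiv Pdata M + KLdiv Pmodel M := by
    rw [JSDiv, hM]; ring
  have hlog4 : Real.log 4 = 2 * Real.log 2 := by
    rw [show (4 : ℝ) = 2 ^ 2 by norm_num, Real.log_pow]
    push_cast; ring
  have hsum : ∑ k, w k * ∫ x in {x | 0 < pmodel x},
      p k x * Real.log (w k * p k x / pmodel x) ∂μ
      = (∑ k, w k * KLdiv (Pgen k) Pmodel) + ∑ k, w k * Real.log (w k) := by
    rw [← Finset.sum_add_distrib]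
    refine Finset.sum_congr rfl fun k _ => ?_
    rw [hsplit3 k]; ring
  rw [hsum, hJSD, hsplit1, hsplit2, hlog4]
  ring
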